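/- If a bipartite system O+A has a maximally mixed (trivial-Hamiltonian Gibbs) state on A, i.e. ρ = (1/d_A)·1_A ⊗ ρ_O, then for every unitary U on ℂ^{d_O} ⊗ ℂ^{d_A}, the largest eigenvalue of Tr_A[UρU†] is at most the largest eigenvalue of ρ_O; hence no unitary acting on O+A alone can increase the probability of preparing O in any fixed pure state. -/

import Mathlib

open Finset Matrix
open scoped Kronecker ComplexOrder

/-- Partial trace over the second (auxiliary) factor. -/
noncomputable def ptraceA {dO dA : ℕ}
    (M : Matrix (Fin dO × Fin dA) (Fin dO × Fin dA) ℂ) :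
    Matrix (Fin dO) (Fin dO) ℂ :=
  Matrix.of fun i j => ∑ k : Fin dA, M (i, k) (j, k)

lemma sub_kron {l m n p : Type*} (A B : Matrix l m ℂ) (C : Matrix n p ℂ) :
    (A - B) ⊗ₖ C = A ⊗ₖ C - B ⊗ₖ C := by
  ext ⟨i, k⟩ ⟨j, l⟩
  simp [Matrix.kroneckerMap_apply, sub_mul]

lemma smul_one_sub_psd {n : ℕ} (A : Matrix (Fin n) (Fin n) ℂ) (hA : A.IsHermitian)
    (c : ℝ) (hc : ∀ i, hA.eigenvalues i ≤ c) :
    ((c : ℂ) • 1 - A).PosSemidef := by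
  set V : Matrix (Fin n) (Fin n) ℂ := (hA.eigenvectorUnitary : Matrix (Fin n) (Fin n) ℂ)
  have hV : V * Vᴴ = 1 := by
    simpa [Matrix.star_eq_conjTranspose] using
      (Matrix.mem_unitaryGroup_iff).mp hA.eigenvectorUnitary.2
  have key : (c : ℂ) • 1 - A
      = V * Matrix.diagonal (fun i => ((c - hA.eigenvalues i : ℝ) : ℂ)) * Vᴴ := by
    have hd : Matrix.diagonal (fun i => ((c - hA.eigenvalues i : ℝ) : ℂ))
        = (c : ℂ) • 1 - Matrix.diagonal (RCLike.ofReal ∘ hA.eigenvalues) := by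
      ext i j
      by_cases h : i = j
      · subst h
        simp [Matrix.one_apply]
      · simp [Matrix.diagonal_apply_ne _ h, Matrix.one_apply_ne h]
    have hst := hA.spectral_theorem
    rw [Unitary.conjStarAlgAut_apply, Matrix.star_eq_conjTranspose] at hst
    rw [hd, Matrix.mul_sub, Matrix.sub_mul, ← hst]
    congr 1
    rw [Matrix.mul_smul, Matrix.smul_mul, Matrix.mul_one, hV]
  rw [key]
  exact (Matrix.posSemidef_diagonal_iff.mpr fun i =>
    Complex.zero_le_real.mpr (by linarith [hc i])).mul_mul_conjTranspose_same V

lemma kron_psd {dO dA : ℕ} (A : Matrix (Fin dO) (Fin dO) ℂ) (hA : A.PosSemidef)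
    (b : ℝ) (hb : 0 ≤ b) :
    (A ⊗ₖ ((b : ℂ) • (1 : Matrix (Fin dA) (Fin dA) ℂ))).PosSemidef := by
  have hAe : ∀ i j, star (A j i) = A i j := fun i j => by
    rw [← Matrix.conjTranspose_apply, hA.1.eq]
  refine Matrix.posSemidef_iff_dotProduct_mulVec.mpr ⟨?_, ?_⟩
  · show _ = _
    ext ⟨i, k⟩ ⟨j, l⟩
    simp only [Matrix.conjTranspose_apply, Matrix.kroneckerMap_apply, Matrix.smul_apply,
      smul_eq_mul, star_mul']
    by_cases h : k = l
    · subst h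
      simp [Matrix.one_apply, hAe, Complex.conj_ofReal, mul_comm]
    · simp [Matrix.one_apply_ne (Ne.symm h), Matrix.one_apply_ne h]
  · intro x
    have key : star x ⬝ᵥ (A ⊗ₖ ((b : ℂ) • (1 : Matrix (Fin dA) (Fin dA) ℂ))).mulVec x
        = ∑ l : Fin dA, (b : ℂ) *
          (star (fun i => x (i, l)) ⬝ᵥ A.mulVec (fun i => x (i, l))) := by
      simp only [dotProduct, Matrix.mulVec, Pi.star_apply,
        Fintype.sum_prod_type, Matrix.kroneckerMap_apply, Matrix.smul_apply,
        Matrix.one_apply, smul_eq_mul, mul_ite, mul_zero, ite_mul, zero_mul,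
        Finset.sum_ite_eq, Finset.mem_univ, if_true]
      rw [Finset.sum_comm]
      refine Finset.sum_congr rfl fun l _ => ?_
      simp only [Finset.mul_sum]
      exact Finset.sum_congr rfl fun i _ => Finset.sum_congr rfl fun j _ => by ring
    rw [key]
    exact Finset.sum_nonneg fun l _ =>
      mul_nonneg (Complex.zero_le_real.mpr hb) (hA.dotProduct_mulVec_nonneg _)

lemma ptrace_quad_nonneg {dO dA : ℕ}
    (M : Matrix (Fin dO × Fin dA) (Fin dO × Fin dA) ℂ) (hM : M.PosSemidef)
    (ψ : Fin dO → ℂ) :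
    0 ≤ star ψ ⬝ᵥ (ptraceA M).mulVec ψ := by
  have key : star ψ ⬝ᵥ (ptraceA M).mulVec ψ
      = ∑ k : Fin dA,
        star (fun p : Fin dO × Fin dA => if p.2 = k then ψ p.1 else 0) ⬝ᵥ
          M.mulVec (fun p : Fin dO × Fin dA => if p.2 = k then ψ p.1 else 0) := by
    simp only [dotProduct, Matrix.mulVec, Pi.star_apply, ptraceA, Matrix.of_apply,
      Fintype.sum_prod_type, apply_ite, star_zero, mul_ite, mul_zero, ite_mul, zero_mul,
      Finset.sum_ite_eq, Finset.mem_univ, if_true]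
    simp only [Finset.sum_ite_eq', Finset.mem_univ, if_true, Finset.sum_mul, Finset.mul_sum]
    rw [show (∑ x : Fin dO, ∑ x_1 : Fin dO, ∑ i : Fin dA, star (ψ x) * (M (x, i) (x_1, i) * ψ x_1))
        = ∑ x : Fin dO, ∑ i : Fin dA, ∑ x_1 : Fin dO, star (ψ x) * (M (x, i) (x_1, i) * ψ x_1)
      from Finset.sum_congr rfl fun i _ => Finset.sum_comm]
    exact Finset.sum_comm
  rw [key]
  exact Finset.sum_nonneg fun k _ => hM.dotProduct_mulVec_nonneg _

lemma ptrace_sub_smul_one {dO dA : ℕ} (c : ℂ)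
    (M : Matrix (Fin dO × Fin dA) (Fin dO × Fin dA) ℂ) :
    ptraceA (c • 1 - M) = ((dA : ℂ) * c) • 1 - ptraceA M := by
  ext i j
  simp only [ptraceA, Matrix.of_apply, Matrix.sub_apply, Matrix.smul_apply, Matrix.one_apply,
    smul_eq_mul, Finset.sum_sub_distrib, Prod.mk.injEq]
  by_cases h : i = j <;> simp [h, Finset.mul_sum, mul_comm]

theorem no_erasure_with_maximally_mixed_auxiliary {dO dA : ℕ} (hdO : 0 < dO)
    (hdA : 0 < dA)
    (ρO : Matrix (Fin dO) (Fin dO) ℂ) (hρO : ρO.IsHermitian)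
    (hρO_psd : ρO.PosSemidef) (hρO_tr : ρO.trace = 1)
    (ρ : Matrix (Fin dO × Fin dA) (Fin dO × Fin dA) ℂ)
    (hρ : ρ = ρO ⊗ₖ (((dA : ℂ)⁻¹ : ℂ) • (1 : Matrix (Fin dA) (Fin dA) ℂ))) :
    ∀ U ∈ Matrix.unitaryGroup (Fin dO × Fin dA) ℂ,
      ∀ ψ : Fin dO → ℂ, star ψ ⬝ᵥ ψ = 1 →
        (star ψ ⬝ᵥ (ptraceA (U * ρ * Uᴴ)).mulVec ψ).re
          ≤ Finset.univ.sup' (Finset.univ_nonempty_iff.mpr ⟨⟨0, hdO⟩⟩)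
              hρO.eigenvalues := by
  intro U hU ψ hψ
  set o : ℝ := Finset.univ.sup' (Finset.univ_nonempty_iff.mpr ⟨⟨0, hdO⟩⟩) hρO.eigenvalues with ho
  have hle : ∀ i, hρO.eigenvalues i ≤ o := fun i => Finset.le_sup' _ (Finset.mem_univ i)
  have hdA' : (dA : ℂ) ≠ 0 := Nat.cast_ne_zero.mpr hdA.ne'
  have hcast : (((dA : ℝ)⁻¹ : ℝ) : ℂ) = ((dA : ℂ))⁻¹ := by push_cast; ring
  have h1 : ((o : ℂ) • 1 - ρO).PosSemidef := smul_one_sub_psd ρO hρO o hle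
  set c : ℂ := (o : ℂ) * ((dA : ℂ))⁻¹ with hc
  have h2 : (c • 1 - ρ).PosSemidef := by
    have h3 := kron_psd (dA := dA) _ h1 ((dA : ℝ)⁻¹) (by positivity)
    rw [hcast] at h3
    have heq : ((o : ℂ) • 1 - ρO) ⊗ₖ (((dA : ℂ))⁻¹ • (1 : Matrix (Fin dA) (Fin dA) ℂ))
        = c • 1 - ρ := by
      rw [hρ, sub_kron, Matrix.smul_kronecker, Matrix.kronecker_smul, Matrix.one_kronecker_one,
        smul_smul]
    rwa [heq] at h3
  have hUU : U * Uᴴ = 1 := by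
    simpa [Matrix.star_eq_conjTranspose] using (Matrix.mem_unitaryGroup_iff).mp hU
  have h4 : (c • 1 - U * ρ * Uᴴ).PosSemidef := by
    have h5 := h2.mul_mul_conjTranspose_same U
    have heq : U * (c • 1 - ρ) * Uᴴ = c • 1 - U * ρ * Uᴴ := by
      rw [Matrix.mul_sub, Matrix.sub_mul, Matrix.mul_smul, Matrix.mul_one, Matrix.smul_mul, hUU]
    rwa [heq] at h5
  have h6 := ptrace_quad_nonneg _ h4 ψ
  rw [ptrace_sub_smul_one] at h6
  have hval : star ψ ⬝ᵥ (((dA : ℂ) * c) • 1 - ptraceA (U * ρ * Uᴴ)).mulVec ψ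
      = (o : ℂ) - star ψ ⬝ᵥ (ptraceA (U * ρ * Uᴴ)).mulVec ψ := by
    rw [Matrix.sub_mulVec, dotProduct_sub, Matrix.smul_mulVec,
      Matrix.one_mulVec, dotProduct_smul, hψ, smul_eq_mul, mul_one]
    congr 1
    rw [hc]
    field_simp
  rw [hval] at h6
  have h7 := (Complex.le_def.mp h6).1
  simp only [Complex.zero_re, Complex.sub_re, Complex.ofReal_re] at h7
  linarith
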